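/- Let q be a prime power and let a, m, n be positive integers with a·m ≤ n and q ≥ n + 1. Then the number of orbits of the Frobenius group Gal(𝔽_{q^a}/𝔽_{q}) acting on the set of x ∈ 𝔽_{q^a}^× with 𝔽_q(x) = 𝔽_{q^a} is at least m. (Each such orbit has size exactly a, so equivalently the number of nonzero elements of 𝔽_{q^a} of degree exactly a over 𝔽_q is at least a·m.) -/

import Mathlib

open scoped Classical

lemma stmt16_geom_aux (q : ℕ) (hq : 2 ≤ q) :
    ∀ b : ℕ, (∑ i ∈ Finset.range b, q ^ (i+1)) + q ≤ q ^ (b+1) := by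
  intro b
  induction b with
  | zero => simp
  | succ b ih =>
    rw [Finset.sum_range_succ]
    calc (∑ i ∈ Finset.range b, q ^ (i+1)) + q ^ (b+1) + q
        = ((∑ i ∈ Finset.range b, q ^ (i+1)) + q) + q ^ (b+1) := by ring
      _ ≤ q ^ (b+1) + q ^ (b+1) := by omega
      _ ≤ q * q ^ (b+1) := by nlinarith [(Nat.pow_pos (by omega : 0 < q) : 0 < q ^ (b+1))]
      _ = q ^ (b+2) := by ring

lemma stmt16_root_count (E : Type) [Field E] [Fintype E] (N : ℕ) (hN : 2 ≤ N) :
    (Finset.univ.filter fun x : E => x ^ N = x).card ≤ N := by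
  classical
  set p : Polynomial E := Polynomial.X ^ N - Polynomial.X with hp
  have hmonic : p.Monic := by
    apply (Polynomial.monic_X_pow N).sub_of_left
    rw [Polynomial.degree_X_pow, Polynomial.degree_X]
    exact_mod_cast hN.trans_lt' one_lt_two
  have hp0 : p ≠ 0 := hmonic.ne_zero
  have hdeg : p.natDegree ≤ N := by
    apply (Polynomial.natDegree_sub_le _ _).trans
    simp [Polynomial.natDegree_X_pow, Polynomial.natDegree_X]; omega
  have hsub : (Finset.univ.filter fun x : E => x ^ N = x) ⊆ p.roots.toFinset := by
    intro x hx
    simp only [Finset.mem_filter] at hx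
    rw [Multiset.mem_toFinset, Polynomial.mem_roots hp0]
    simp [hp, Polynomial.IsRoot, hx.2]
  calc _ ≤ p.roots.toFinset.card := Finset.card_le_card hsub
    _ ≤ Multiset.card p.roots := Multiset.toFinset_card_le _
    _ ≤ p.natDegree := p.card_roots'
    _ ≤ N := hdeg

lemma stmt16_pow_card (F E : Type) [Field F] [Field E] [Fintype F] [Fintype E] [Algebra F E]
    (q : ℕ) (hq : Fintype.card F = q) (x : E) :
    x ^ q ^ (minpoly F x).natDegree = x := by
  have : FiniteDimensional F E := Module.Finite.of_finite
  have hint : IsIntegral F x := IsIntegral.of_finite F x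
  set K := IntermediateField.adjoin F {x} with hK
  have hfr : Module.finrank F K = (minpoly F x).natDegree :=
    IntermediateField.adjoin.finrank hint
  haveI : Fintype K := Fintype.ofFinite K
  have hcard : Fintype.card K = q ^ (minpoly F x).natDegree := by
    rw [Module.card_eq_pow_finrank (K := F) (V := K), hq, hfr]
  have hxK : x ∈ K := IntermediateField.mem_adjoin_simple_self F x
  have := FiniteField.pow_card (⟨x, hxK⟩ : K)
  rw [hcard] at this
  have := congrArg (Subtype.val) this
  simpa using this

/-- Lemma A.4: if `F` is a finite field with `q` elements, `E/F` an
extension of degree `a`, and `a·m ≤ n` with `q ≥ n + 1`, then the number of nonzero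
elements of `E` of degree exactly `a` over `F` is at least `a·m` (equivalently, the number
of Frobenius orbits of such elements is at least `m`). -/
theorem stmt16 (F E : Type) [Field F] [Field E] [Fintype F] [Fintype E] [Algebra F E]
    (q a m n : ℕ) (hq : Fintype.card F = q) (ha : Module.finrank F E = a)
    (ha1 : 1 ≤ a) (hm1 : 1 ≤ m) (hn1 : 1 ≤ n) (hamn : a * m ≤ n) (hqn : n + 1 ≤ q) :
    a * m ≤ (Finset.univ.filter fun x : E => x ≠ 0 ∧ (minpoly F x).natDegree = a).card := by
  classical
  have : FiniteDimensional F E := Module.Finite.of_finite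
  have hq2 : 2 ≤ q := by omega
  set T := Finset.univ.filter fun x : E => x ≠ 0 ∧ (minpoly F x).natDegree = a with hT
  set C := Finset.univ.filter fun x : E => ¬(x ≠ 0 ∧ (minpoly F x).natDegree = a) with hC
  have hcardE : Fintype.card E = q ^ a := by
    rw [Module.card_eq_pow_finrank (K := F) (V := E), hq, ha]
  have hTC : T.card + C.card = q ^ a := by
    rw [hT, hC, Finset.card_filter_add_card_filter_not, ← hcardE]
    simp
  -- every element of C (besides possibly 0) has minpoly degree between 1 and a-1
  have hCsub : C ⊆ insert (0 : E) ((Finset.range (a-1)).biUnion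
      fun i => Finset.univ.filter fun x : E => x ^ q ^ (i+1) = x) := by
    intro x hx
    rw [hC, Finset.mem_filter] at hx
    rcases eq_or_ne x 0 with h0 | h0
    · simp [h0]
    refine Finset.mem_insert_of_mem ?_
    have hint : IsIntegral F x := IsIntegral.of_finite F x
    have hd1 : 1 ≤ (minpoly F x).natDegree := minpoly.natDegree_pos hint
    have hda : (minpoly F x).natDegree ≤ a := ha ▸ minpoly.natDegree_le x
    have hdne : (minpoly F x).natDegree ≠ a := by
      intro h; exact hx.2 ⟨h0, h⟩
    rw [Finset.mem_biUnion]
    refine ⟨(minpoly F x).natDegree - 1, ?_, ?_⟩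
    · rw [Finset.mem_range]; omega
    · rw [Finset.mem_filter]
      have hdd : (minpoly F x).natDegree - 1 + 1 = (minpoly F x).natDegree := by omega
      rw [hdd]
      exact ⟨Finset.mem_univ x, stmt16_pow_card F E q hq x⟩
  have hCcard : C.card ≤ 1 + ∑ i ∈ Finset.range (a-1), q ^ (i+1) := by
    calc C.card ≤ (insert (0 : E) ((Finset.range (a-1)).biUnion
          fun i => Finset.univ.filter fun x : E => x ^ q ^ (i+1) = x)).card :=
        Finset.card_le_card hCsub
      _ ≤ 1 + ((Finset.range (a-1)).biUnion
          fun i => Finset.univ.filter fun x : E => x ^ q ^ (i+1) = x).card :=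
        (Finset.card_insert_le _ _).trans (by omega)
      _ ≤ 1 + ∑ i ∈ Finset.range (a-1), q ^ (i+1) := by
        gcongr
        refine (Finset.card_biUnion_le).trans ?_
        apply Finset.sum_le_sum
        intro i _
        exact stmt16_root_count E (q ^ (i+1)) (le_trans hq2 (Nat.le_self_pow (by omega) q))
  have hgeom : (∑ i ∈ Finset.range (a-1), q ^ (i+1)) + q ≤ q ^ a := by
    have := stmt16_geom_aux q hq2 (a-1)
    have hh : a - 1 + 1 = a := by omega
    rwa [hh] at this
  omega
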